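/- Let G be a finite group, k ≥ 1 an integer, and fix signs t_0,…,t_{k−1} ∈ {+,−}. On H = (ℂ^G)^{⊗k} let T_i^g denote the operator acting as T^g_{t_i} on the i-th tensor factor and as the identity elsewhere. Let D_j (j ∈ G×G) be the operators on ℂ^{G×G} defined by D_j |κ⟩ = ∑_{m ∈ G×G} Ω^{κ}_{m j} |m⟩, and let |Ψ⟩ = (1/√|G|) ∑_{h∈G} |(h,1)⟩ ∈ ℂ^{G×G}. On H ⊗ ℂ^{G×G} define M_i = ∑_{(h,g) ∈ G×G} T_i^{g⁻¹} ⊗ D_{(h,g)}. Then (1_H ⊗ ⟨Ψ|) M_0 M_1 ⋯ M_{k−1} (1_H ⊗ |Ψ⟩) = ∑ T_0^{a_0} T_1^{a_1} ⋯ T_{k−1}^{a_{k−1}}, the sum over all tuples (a_0,…,a_{k−1}) ∈ G^k with a_{k−1} ⋯ a_1 a_0 = 1, and the reversed adjoint product (1_H ⊗ ⟨Ψ|) M_{k−1}† ⋯ M_0† (1_H ⊗ |Ψ⟩) yields the same operator. -/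

import Mathlib

open Matrix Kronecker BigOperators

noncomputable section

variable {G : Type*} [Group G] [Fintype G] [DecidableEq G]

/-- `L^g_+ : |z⟩ ↦ |gz⟩` (left multiplication by `g`). -/
def Lp (g : G) : Matrix G G ℂ := Matrix.of fun x z => if x = g * z then 1 else 0

/-- `L^g_- : |z⟩ ↦ |z g⁻¹⟩` (right multiplication by `g⁻¹`). -/
def Lm (g : G) : Matrix G G ℂ := Matrix.of fun x z => if x = z * g⁻¹ then 1 else 0

/-- `T^g_+ = |g⟩⟨g|`. -/
def Tp (g : G) : Matrix G G ℂ := Matrix.of fun x z => if x = g ∧ z = g then 1 else 0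

/-- `T^g_- = |g⁻¹⟩⟨g⁻¹|`. -/
def Tm (g : G) : Matrix G G ℂ := Tp g⁻¹

/-- Signed `L` operator: `true` stands for `+`, `false` for `−`. -/
def Lsgn (s : Bool) (g : G) : Matrix G G ℂ := if s then Lp g else Lm g

/-- Signed `T` operator: `true` stands for `+`, `false` for `−`. -/
def Tsgn (s : Bool) (g : G) : Matrix G G ℂ := if s then Tp g else Tm g

/-- The operator acting as `A` on the `i`-th tensor factor of `(ℂ^G)^{⊗k}`
and as the identity on all other factors. -/
def factor {k : ℕ} (i : Fin k) (A : Matrix G G ℂ) : Matrix (Fin k → G) (Fin k → G) ℂ :=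
  Matrix.of fun x y => if ∀ j, j ≠ i → x j = y j then A (x i) (y i) else 0

/-- The partial matrix element `(1_H ⊗ ⟨ψ|) Z (1_H ⊗ |ψ⟩)` of an operator `Z` on `H ⊗ ℂ^R`. -/
def pme {H R : Type*} [Fintype R] (ψ : R → ℂ) (Z : Matrix (H × R) (H × R) ℂ) :
    Matrix H H ℂ :=
  Matrix.of fun x y => ∑ a : R, ∑ b : R, (starRingEnd ℂ) (ψ a) * Z (x, a) (y, b) * ψ b

/-- The structure constants `Ω^κ_{mn}` of the quantum double. -/
def Om (k m n : G × G) : ℂ :=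
  if k.2 = m.2 * n.2 ∧ m.1 = k.1 ∧ n.1 = m.2⁻¹ * k.1 * m.2 then 1 else 0

/-- The operator `D_j` on `ℂ^{G×G}` defined by `D_j |κ⟩ = ∑_m Ω^κ_{m j} |m⟩`. -/
def Dop (j : G × G) : Matrix (G × G) (G × G) ℂ := Matrix.of fun m k => Om k m j

/-- Auxiliary: `C_g |(h,u)⟩ ↦ ...` right-translation operator on the second coordinate. -/
def Cop (g : G) : Matrix (G × G) (G × G) ℂ :=
  Matrix.of fun a b => if b = (a.1, a.2 * g) then 1 else 0

set_option linter.unusedSectionVars false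

lemma sum_Dop (g : G) : (∑ h : G, Dop (h, g)) = Cop g := by
  ext a b
  simp only [Matrix.sum_apply, Dop, Om, Cop, Matrix.of_apply, Prod.ext_iff]
  rw [Finset.sum_eq_single (a.2⁻¹ * b.1 * a.2)]
  · by_cases h : b.1 = a.1 ∧ b.2 = a.2 * g
    · rw [if_pos, if_pos]
      · exact h
      · exact ⟨h.2, h.1.symm, rfl⟩
    · rw [if_neg, if_neg h]
      rintro ⟨h1, h2, -⟩; exact h ⟨h2.symm, h1⟩
  · intro c _ hc
    rw [if_neg]; rintro ⟨-, -, h3⟩; exact hc h3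
  · simp

lemma Cop_one : Cop (1 : G) = 1 := by
  ext a b
  simp [Cop, Matrix.one_apply, Prod.ext_iff, eq_comm, and_comm]

lemma Cop_mul (g g' : G) : Cop g * Cop g' = Cop (g * g') := by
  ext a b
  simp only [Cop, Matrix.mul_apply, Matrix.of_apply]
  rw [Finset.sum_eq_single ((a.1, a.2 * g) : G × G)]
  · rw [if_pos rfl, one_mul, mul_assoc]
  · intro c _ hc
    rw [if_neg hc, zero_mul]
  · simp

lemma Cop_conjTranspose (g : G) : (Cop g)ᴴ = Cop g⁻¹ := by
  ext a b
  simp only [Matrix.conjTranspose_apply, Cop, Matrix.of_apply]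
  by_cases h : a = (b.1, b.2 * g)
  · rw [if_pos h, if_pos]
    · simp
    · rw [h]; simp [Prod.ext_iff]
  · rw [if_neg h, if_neg]
    · simp
    · intro hc; apply h; rw [hc]; simp [Prod.ext_iff]

lemma Tsgn_conjTranspose (s : Bool) (g : G) : (Tsgn s g)ᴴ = Tsgn s g := by
  have h : ∀ u : G, (Tp u)ᴴ = Tp u := by
    intro u; ext x z
    simp only [Matrix.conjTranspose_apply, Tp, Matrix.of_apply, and_comm]
    split <;> simp
  cases s <;> simp [Tsgn, Tm, h]

lemma factor_conjTranspose {k : ℕ} (i : Fin k) (A : Matrix G G ℂ) :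
    (factor i A)ᴴ = factor i Aᴴ := by
  ext x y
  simp only [Matrix.conjTranspose_apply, factor, Matrix.of_apply]
  by_cases h : ∀ j, j ≠ i → x j = y j
  · rw [if_pos h, if_pos (fun j hj => (h j hj).symm)]
  · rw [if_neg h, if_neg (fun hc => h fun j hj => (hc j hj).symm), star_zero]

lemma factor_mul_apply {k : ℕ} (i j : Fin k) (hij : i ≠ j) (A B : Matrix G G ℂ)
    (x y : Fin k → G) :
    (factor i A * factor j B) x y =
      if ∀ m, m ≠ i → m ≠ j → x m = y m then A (x i) (y i) * B (x j) (y j) else 0 := by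
  rw [Matrix.mul_apply]
  rw [Finset.sum_eq_single (Function.update x i (y i))]
  · simp only [factor, Matrix.of_apply]
    rw [if_pos (fun m hm => (Function.update_of_ne hm _ _).symm)]
    rw [Function.update_self, Function.update_of_ne hij.symm]
    by_cases h : ∀ m, m ≠ i → m ≠ j → x m = y m
    · have hc : ∀ m, m ≠ j → Function.update x i (y i) m = y m := by
        intro m hmj
        rcases eq_or_ne m i with rfl | hmi
        · exact Function.update_self _ _ _
        · rw [Function.update_of_ne hmi]; exact h m hmi hmj
      rw [if_pos hc, if_pos h]
    · have hc : ¬ ∀ m, m ≠ j → Function.update x i (y i) m = y m := by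
        intro hc
        apply h
        intro m hmi hmj
        have := hc m hmj
        rwa [Function.update_of_ne hmi] at this
      rw [if_neg hc, if_neg h, mul_zero]
  · intro z _ hz
    simp only [factor, Matrix.of_apply]
    by_cases h1 : ∀ m, m ≠ i → x m = z m
    · have hzx : z = Function.update x i (z i) := by
        funext m
        rcases eq_or_ne m i with rfl | hmi
        · simp
        · rw [Function.update_of_ne hmi]; exact (h1 m hmi).symm
      have hzi : z i ≠ y i := by
        intro h; apply hz; rw [hzx, h]
      have h2 : ¬ ∀ m, m ≠ j → z m = y m := fun hc => hzi (hc i hij)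
      rw [if_neg h2, mul_zero]
    · rw [if_neg h1, zero_mul]
  · simp

lemma factor_commute {k : ℕ} (i j : Fin k) (hij : i ≠ j) (A B : Matrix G G ℂ) :
    Commute (factor i A) (factor j B) := by
  show _ = _
  ext x y
  rw [factor_mul_apply i j hij, factor_mul_apply j i hij.symm]
  have hiff : (∀ m, m ≠ i → m ≠ j → x m = y m) ↔ (∀ m, m ≠ j → m ≠ i → x m = y m) :=
    forall_congr' fun m => by tauto
  by_cases h : ∀ m, m ≠ i → m ≠ j → x m = y m
  · rw [if_pos h, if_pos (hiff.mp h)]; ring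
  · rw [if_neg h, if_neg (fun hc => h (hiff.mpr hc))]

lemma kron_sum_left {n m : Type*} [Fintype n] [Fintype m] {ι : Type*} (s : Finset ι)
    (A : ι → Matrix n n ℂ) (B : Matrix m m ℂ) :
    (∑ i ∈ s, A i) ⊗ₖ B = ∑ i ∈ s, A i ⊗ₖ B := by
  ext ⟨x, a⟩ ⟨y, b⟩
  simp [Matrix.kroneckerMap_apply, Matrix.sum_apply, Finset.sum_mul]

lemma kron_sum_right {n m : Type*} [Fintype n] [Fintype m] {ι : Type*} (s : Finset ι)
    (A : Matrix n n ℂ) (B : ι → Matrix m m ℂ) :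
    A ⊗ₖ (∑ i ∈ s, B i) = ∑ i ∈ s, A ⊗ₖ B i := by
  ext ⟨x, a⟩ ⟨y, b⟩
  simp [Matrix.kroneckerMap_apply, Matrix.sum_apply, Finset.mul_sum]

lemma kron_conjTranspose {n m : Type*} [Fintype n] [Fintype m]
    (A : Matrix n n ℂ) (B : Matrix m m ℂ) : (A ⊗ₖ B)ᴴ = Aᴴ ⊗ₖ Bᴴ := by
  ext ⟨x, a⟩ ⟨y, b⟩
  simp [Matrix.kroneckerMap_apply, Matrix.conjTranspose_apply]

def Wgen {k : ℕ} (F : Fin k → G → Matrix (Fin k → G) (Fin k → G) ℂ) :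
    List (Fin k) → G → Matrix (Fin k → G) (Fin k → G) ℂ
  | [], g => if g = 1 then 1 else 0
  | i :: L, g => ∑ u : G, F i u * Wgen F L (g * u⁻¹)

def Wgen' {k : ℕ} (F : Fin k → G → Matrix (Fin k → G) (Fin k → G) ℂ) :
    List (Fin k) → G → Matrix (Fin k → G) (Fin k → G) ℂ
  | [], g => if g = 1 then 1 else 0
  | i :: L, g => ∑ u : G, Wgen' F L (g * u⁻¹) * F i u

lemma prod_eq {k : ℕ} (F : Fin k → G → Matrix (Fin k → G) (Fin k → G) ℂ)
    (A : Fin k → Matrix ((Fin k → G) × (G × G)) ((Fin k → G) × (G × G)) ℂ)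
    (hA : ∀ i, A i = ∑ g : G, F i g ⊗ₖ Cop g⁻¹) :
    ∀ L : List (Fin k), (L.map A).prod = ∑ g : G, Wgen F L g ⊗ₖ Cop g⁻¹
  | [] => by
    rw [List.map_nil, List.prod_nil, Finset.sum_eq_single (1 : G)]
    · rw [Wgen, if_pos rfl, inv_one, Cop_one, Matrix.one_kronecker_one]
    · intro c _ hc
      rw [Wgen, if_neg hc, Matrix.zero_kronecker]
    · simp
  | i :: L => by
    rw [List.map_cons, List.prod_cons, prod_eq F A hA L, hA i, Finset.sum_mul_sum]
    have step : ∀ u : G,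
        (∑ h : G, (F i u ⊗ₖ Cop u⁻¹) * (Wgen F L h ⊗ₖ Cop h⁻¹)) =
        ∑ g : G, (F i u * Wgen F L (g * u⁻¹)) ⊗ₖ Cop g⁻¹ := by
      intro u
      apply Fintype.sum_equiv (Equiv.mulRight u)
      intro h
      rw [← Matrix.mul_kronecker_mul, Cop_mul, Equiv.coe_mulRight,
        mul_inv_cancel_right, _root_.mul_inv_rev]
    rw [Finset.sum_congr rfl fun u _ => step u, Finset.sum_comm]
    exact Finset.sum_congr rfl fun g _ => by
      rw [← kron_sum_left, Wgen]

lemma prod_eq' {k : ℕ} (F : Fin k → G → Matrix (Fin k → G) (Fin k → G) ℂ)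
    (A : Fin k → Matrix ((Fin k → G) × (G × G)) ((Fin k → G) × (G × G)) ℂ)
    (hA : ∀ i, A i = ∑ g : G, F i g ⊗ₖ Cop g) :
    ∀ L : List (Fin k), (L.reverse.map A).prod = ∑ g : G, Wgen' F L g ⊗ₖ Cop g
  | [] => by
    rw [List.reverse_nil, List.map_nil, List.prod_nil, Finset.sum_eq_single (1 : G)]
    · rw [Wgen', if_pos rfl, Cop_one, Matrix.one_kronecker_one]
    · intro c _ hc
      rw [Wgen', if_neg hc, Matrix.zero_kronecker]
    · simp
  | i :: L => by
    rw [List.reverse_cons, List.map_append, List.prod_append, prod_eq' F A hA L,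
      List.map_singleton, List.prod_singleton, hA i, Finset.sum_mul_sum]
    have step : ∀ u : G,
        (∑ h : G, (Wgen' F L h ⊗ₖ Cop h) * (F i u ⊗ₖ Cop u)) =
        ∑ g : G, (Wgen' F L (g * u⁻¹) * F i u) ⊗ₖ Cop g := by
      intro u
      apply Fintype.sum_equiv (Equiv.mulRight u)
      intro h
      rw [← Matrix.mul_kronecker_mul, Cop_mul, Equiv.coe_mulRight, mul_inv_cancel_right]
    rw [Finset.sum_comm, Finset.sum_congr rfl fun u _ => step u, Finset.sum_comm]
    exact Finset.sum_congr rfl fun g _ => by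
      rw [← kron_sum_left, Wgen']

lemma pme_sum {H R ι : Type*} [Fintype R] (ψ : R → ℂ) (s : Finset ι)
    (Z : ι → Matrix (H × R) (H × R) ℂ) :
    pme ψ (∑ i ∈ s, Z i) = ∑ i ∈ s, pme ψ (Z i) := by
  ext x y
  simp only [pme, Matrix.of_apply, Matrix.sum_apply, Finset.mul_sum, Finset.sum_mul]
  rw [Finset.sum_congr rfl fun a _ => Finset.sum_comm]
  exact Finset.sum_comm

lemma pme_kron {H : Type*} (ψ : G × G → ℂ) (X : Matrix H H ℂ)
    (Y : Matrix (G × G) (G × G) ℂ) :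
    pme ψ (X ⊗ₖ Y) = (∑ a : G × G, ∑ b : G × G,
      (starRingEnd ℂ) (ψ a) * Y a b * ψ b) • X := by
  ext x y
  simp only [pme, Matrix.of_apply, Matrix.smul_apply, Matrix.kroneckerMap_apply,
    smul_eq_mul, Finset.sum_mul]
  exact Finset.sum_congr rfl fun a _ => Finset.sum_congr rfl fun b _ => by ring

lemma tau_Cop (ψ : G × G → ℂ)
    (hψ : ∀ p, ψ p = if p.2 = 1 then (Real.sqrt (Fintype.card G) : ℂ)⁻¹ else 0) (c : G) :
    (∑ a : G × G, ∑ b : G × G, (starRingEnd ℂ) (ψ a) * Cop c a b * ψ b) =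
      if c = 1 then 1 else 0 := by
  have hn : (0 : ℝ) ≤ (Fintype.card G : ℝ) := Nat.cast_nonneg _
  have hs : ((Real.sqrt (Fintype.card G) : ℂ))⁻¹ * ((Real.sqrt (Fintype.card G) : ℂ))⁻¹
      = ((Fintype.card G : ℂ))⁻¹ := by
    rw [← mul_inv, ← Complex.ofReal_mul, Real.mul_self_sqrt hn]
    push_cast
    ring
  have step1 : ∀ a : G × G,
      (∑ b : G × G, (starRingEnd ℂ) (ψ a) * Cop c a b * ψ b)
        = (starRingEnd ℂ) (ψ a) * ψ (a.1, a.2 * c) := by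
    intro a
    rw [Finset.sum_eq_single ((a.1, a.2 * c) : G × G)]
    · rw [show Cop c a (a.1, a.2 * c) = 1 from by simp [Cop], mul_one]
    · intro b _ hb
      rw [show Cop c a b = 0 from by simp [Cop, hb], mul_zero, zero_mul]
    · simp
  rw [Finset.sum_congr rfl fun a _ => step1 a, Fintype.sum_prod_type]
  have step2 : ∀ h : G,
      (∑ u : G, (starRingEnd ℂ) (ψ (h, u)) * ψ ((h, u).1, (h, u).2 * c))
        = if c = 1 then ((Fintype.card G : ℂ))⁻¹ else 0 := by
    intro h
    rw [Finset.sum_eq_single (1 : G)]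
    · by_cases hc : c = 1 <;>
        simp [hψ, hc, map_inv₀, Complex.conj_ofReal, hs]
    · intro u _ hu
      simp only [hψ, if_neg hu, map_zero, zero_mul]
    · simp
  rw [Finset.sum_congr rfl fun h _ => step2 h, Finset.sum_const, Finset.card_univ]
  by_cases hc : c = 1
  · rw [if_pos hc, if_pos hc, nsmul_eq_mul, mul_inv_cancel₀]
    exact_mod_cast Nat.cast_ne_zero.mpr Fintype.card_ne_zero
  · rw [if_neg hc, if_neg hc, smul_zero]

lemma sum_filter_update {k : ℕ} {α : Type*} [AddCommMonoid α] (q : (Fin k → G) → Prop)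
    [DecidablePred q] (f : (Fin k → G) → α) (i : Fin k) (u : G)
    (hq : ∀ a v, q (Function.update a i v) ↔ q a)
    (hf : ∀ a v, f (Function.update a i v) = f a) :
    (∑ a ∈ Finset.univ.filter q, f a)
      = Fintype.card G •
        ∑ a ∈ Finset.univ.filter (fun a => q a ∧ a i = u), f a := by
  have key : ∀ v : G,
      (∑ a ∈ Finset.univ.filter (fun a => q a ∧ a i = v), f a)
        = ∑ a ∈ Finset.univ.filter (fun a => q a ∧ a i = u), f a := by
    intro v
    apply Finset.sum_nbij' (fun a => Function.update a i u) (fun a => Function.update a i v)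
    · intro a ha
      rw [Finset.mem_filter] at ha ⊢
      exact ⟨Finset.mem_univ _, (hq a u).mpr ha.2.1, Function.update_self _ _ _⟩
    · intro a ha
      rw [Finset.mem_filter] at ha ⊢
      exact ⟨Finset.mem_univ _, (hq a v).mpr ha.2.1, Function.update_self _ _ _⟩
    · intro a ha
      rw [Finset.mem_filter] at ha
      rw [Function.update_idem, ← ha.2.2, Function.update_eq_self]
    · intro a ha
      rw [Finset.mem_filter] at ha
      rw [Function.update_idem, ← ha.2.2, Function.update_eq_self]
    · intro a _
      exact (hf a u).symm
  calc (∑ a ∈ Finset.univ.filter q, f a)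
      = ∑ v : G, ∑ a ∈ (Finset.univ.filter q).filter (fun a => a i = v), f a :=
        (Finset.sum_fiberwise _ _ _).symm
    _ = ∑ v : G, ∑ a ∈ Finset.univ.filter (fun a => q a ∧ a i = u), f a := by
        refine Finset.sum_congr rfl fun v _ => ?_
        rw [Finset.filter_filter]
        exact key v
    _ = _ := by rw [Finset.sum_const, Finset.card_univ]

lemma nsmul_matrix_cancel {m : Type*} (n : ℕ) (hn : n ≠ 0) {X Y : Matrix m m ℂ}
    (h : n • X = n • Y) : X = Y := by
  ext x y
  have h2 : (n • X) x y = (n • Y) x y := by rw [h]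
  simp only [Matrix.smul_apply, nsmul_eq_mul] at h2
  exact mul_left_cancel₀ (by exact_mod_cast hn) h2

lemma Wgen_closed {k : ℕ} (F : Fin k → G → Matrix (Fin k → G) (Fin k → G) ℂ) :
    ∀ L : List (Fin k), L.Nodup → ∀ g : G,
      (Fintype.card G) ^ (k - L.length) • Wgen F L g
        = ∑ a ∈ Finset.univ.filter
            (fun a : Fin k → G => (L.reverse.map a).prod = g),
          (L.map (fun j => F j (a j))).prod
  | [], _, g => by
    simp only [List.length_nil, Nat.sub_zero, List.reverse_nil, List.map_nil,
      List.prod_nil, Wgen]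
    by_cases hg : g = 1
    · subst hg
      rw [if_pos rfl, Finset.filter_true_of_mem (fun _ _ => rfl), Finset.sum_const,
        Finset.card_univ, Fintype.card_fun, Fintype.card_fin]
    · rw [if_neg hg, Finset.filter_false_of_mem (fun a _ h => hg h.symm), Finset.sum_empty,
        smul_zero]
  | i :: L, hnd, g => by
    obtain ⟨hi, hnd'⟩ := List.nodup_cons.mp hnd
    have hlen : L.length + 1 ≤ k := by
      have h1 := hnd.length_le_card
      simpa using h1
    have hn0 : Fintype.card G ≠ 0 := Fintype.card_ne_zero
    have hsplit : ∀ a : Fin k → G,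
        (((i :: L).reverse).map a).prod = (L.reverse.map a).prod * a i := by
      intro a
      rw [List.reverse_cons, List.map_append, List.prod_append, List.map_singleton,
        List.prod_singleton]
    have hProd : ∀ (a : Fin k → G) (v : G),
        ((L.map (fun j => F j ((Function.update a i v) j))).prod)
          = (L.map (fun j => F j (a j))).prod := by
      intro a v
      congr 1
      exact List.map_congr_left fun j hj => by
        rw [Function.update_of_ne (fun h => hi (by rw [← h]; exact hj))]
    have hQ : ∀ (h : G) (a : Fin k → G) (v : G),
        ((L.reverse.map (Function.update a i v)).prod = h)
          ↔ ((L.reverse.map a).prod = h) := by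
      intro h a v
      rw [show List.map (Function.update a i v) L.reverse = List.map a L.reverse from
        List.map_congr_left fun j hj =>
          Function.update_of_ne
            (fun hji => hi (by rw [← hji]; exact List.mem_reverse.mp hj)) _ _]
    have hstep1 : ∀ (u : G) (a : Fin k → G),
        ((((i :: L).reverse).map a).prod = g ∧ a i = u)
          ↔ (((L.reverse.map a).prod = g * u⁻¹) ∧ a i = u) := by
      intro u a
      rw [hsplit a]
      constructor
      · rintro ⟨h1, h2⟩
        subst h2
        rw [eq_mul_inv_iff_mul_eq]
        exact ⟨h1, rfl⟩
      · rintro ⟨h1, h2⟩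
        subst h2
        rw [eq_mul_inv_iff_mul_eq] at h1
        exact ⟨h1, rfl⟩
    have hfib : (∑ a ∈ Finset.univ.filter
          (fun a : Fin k → G => (((i :: L).reverse).map a).prod = g),
          ((i :: L).map (fun j => F j (a j))).prod)
        = ∑ u : G, ∑ a ∈ Finset.univ.filter
            (fun a : Fin k → G => ((L.reverse.map a).prod = g * u⁻¹) ∧ a i = u),
            (F i u * (L.map (fun j => F j (a j))).prod) := by
      rw [← Finset.sum_fiberwise (Finset.univ.filter
        (fun a : Fin k → G => (((i :: L).reverse).map a).prod = g)) (fun a => a i)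
        (fun a => ((i :: L).map (fun j => F j (a j))).prod)]
      refine Finset.sum_congr rfl fun u _ => ?_
      rw [Finset.filter_filter, Finset.filter_congr fun a _ => hstep1 u a]
      refine Finset.sum_congr rfl fun a ha => ?_
      have hai : a i = u := (Finset.mem_filter.mp ha).2.2
      rw [List.map_cons, List.prod_cons, hai]
    have hupd : ∀ u : G, (Fintype.card G) • (∑ a ∈ Finset.univ.filter
          (fun a : Fin k → G => ((L.reverse.map a).prod = g * u⁻¹) ∧ a i = u),
          (L.map (fun j => F j (a j))).prod)
        = ∑ a ∈ Finset.univ.filter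
            (fun a : Fin k → G => (L.reverse.map a).prod = g * u⁻¹),
            (L.map (fun j => F j (a j))).prod := by
      intro u
      exact (sum_filter_update (fun a => (L.reverse.map a).prod = g * u⁻¹) _ i u
        (fun a v => hQ _ a v) hProd).symm
    apply nsmul_matrix_cancel (Fintype.card G) hn0
    calc (Fintype.card G) • ((Fintype.card G) ^ (k - (i :: L).length) • Wgen F (i :: L) g)
        = (Fintype.card G) ^ (k - L.length) • Wgen F (i :: L) g := by
          rw [smul_smul]
          congr 1
          rw [← pow_succ']
          congr 1
          simp only [List.length_cons]
          omega
      _ = (Fintype.card G) ^ (k - L.length) • ∑ u : G, F i u * Wgen F L (g * u⁻¹) := by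
          rw [Wgen]
      _ = ∑ u : G, F i u * ((Fintype.card G) ^ (k - L.length) • Wgen F L (g * u⁻¹)) := by
          rw [Finset.smul_sum]
          exact Finset.sum_congr rfl fun u _ => (mul_smul_comm _ _ _).symm
      _ = ∑ u : G, F i u * ∑ a ∈ Finset.univ.filter
            (fun a : Fin k → G => (L.reverse.map a).prod = g * u⁻¹),
            (L.map (fun j => F j (a j))).prod := by
          exact Finset.sum_congr rfl fun u _ => by
            rw [Wgen_closed F L hnd' (g * u⁻¹)]
      _ = ∑ u : G, (Fintype.card G) • ∑ a ∈ Finset.univ.filter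
            (fun a : Fin k → G => ((L.reverse.map a).prod = g * u⁻¹) ∧ a i = u),
            (F i u * (L.map (fun j => F j (a j))).prod) := by
          refine Finset.sum_congr rfl fun u _ => ?_
          rw [← hupd u, mul_smul_comm, Finset.mul_sum]
      _ = (Fintype.card G) • ∑ u : G, ∑ a ∈ Finset.univ.filter
            (fun a : Fin k → G => ((L.reverse.map a).prod = g * u⁻¹) ∧ a i = u),
            (F i u * (L.map (fun j => F j (a j))).prod) := by
          rw [Finset.smul_sum]
      _ = (Fintype.card G) • ∑ a ∈ Finset.univ.filter
            (fun a : Fin k → G => (((i :: L).reverse).map a).prod = g),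
            ((i :: L).map (fun j => F j (a j))).prod := by
          rw [hfib]

lemma Wgen'_closed {k : ℕ} (F : Fin k → G → Matrix (Fin k → G) (Fin k → G) ℂ) :
    ∀ L : List (Fin k), L.Nodup → ∀ g : G,
      (Fintype.card G) ^ (k - L.length) • Wgen' F L g
        = ∑ a ∈ Finset.univ.filter
            (fun a : Fin k → G => (L.reverse.map a).prod = g),
          (L.reverse.map (fun j => F j (a j))).prod
  | [], _, g => by
    simp only [List.length_nil, Nat.sub_zero, List.reverse_nil, List.map_nil,
      List.prod_nil, Wgen']
    by_cases hg : g = 1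
    · subst hg
      rw [if_pos rfl, Finset.filter_true_of_mem (fun _ _ => rfl), Finset.sum_const,
        Finset.card_univ, Fintype.card_fun, Fintype.card_fin]
    · rw [if_neg hg, Finset.filter_false_of_mem (fun a _ h => hg h.symm), Finset.sum_empty,
        smul_zero]
  | i :: L, hnd, g => by
    obtain ⟨hi, hnd'⟩ := List.nodup_cons.mp hnd
    have hlen : L.length + 1 ≤ k := by
      have h1 := hnd.length_le_card
      simpa using h1
    have hn0 : Fintype.card G ≠ 0 := Fintype.card_ne_zero
    have hsplit : ∀ a : Fin k → G,
        (((i :: L).reverse).map a).prod = (L.reverse.map a).prod * a i := by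
      intro a
      rw [List.reverse_cons, List.map_append, List.prod_append, List.map_singleton,
        List.prod_singleton]
    have hsplitP : ∀ a : Fin k → G,
        (((i :: L).reverse).map (fun j => F j (a j))).prod
          = (L.reverse.map (fun j => F j (a j))).prod * F i (a i) := by
      intro a
      rw [List.reverse_cons, List.map_append, List.prod_append, List.map_singleton,
        List.prod_singleton]
    have hProd : ∀ (a : Fin k → G) (v : G),
        ((L.reverse.map (fun j => F j ((Function.update a i v) j))).prod)
          = (L.reverse.map (fun j => F j (a j))).prod := by
      intro a v
      congr 1
      exact List.map_congr_left fun j hj => by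
        rw [Function.update_of_ne (fun h => hi (by rw [← h]; exact List.mem_reverse.mp hj))]
    have hQ : ∀ (h : G) (a : Fin k → G) (v : G),
        ((L.reverse.map (Function.update a i v)).prod = h)
          ↔ ((L.reverse.map a).prod = h) := by
      intro h a v
      rw [show List.map (Function.update a i v) L.reverse = List.map a L.reverse from
        List.map_congr_left fun j hj =>
          Function.update_of_ne
            (fun hji => hi (by rw [← hji]; exact List.mem_reverse.mp hj)) _ _]
    have hstep1 : ∀ (u : G) (a : Fin k → G),
        ((((i :: L).reverse).map a).prod = g ∧ a i = u)
          ↔ (((L.reverse.map a).prod = g * u⁻¹) ∧ a i = u) := by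
      intro u a
      rw [hsplit a]
      constructor
      · rintro ⟨h1, h2⟩
        subst h2
        rw [eq_mul_inv_iff_mul_eq]
        exact ⟨h1, rfl⟩
      · rintro ⟨h1, h2⟩
        subst h2
        rw [eq_mul_inv_iff_mul_eq] at h1
        exact ⟨h1, rfl⟩
    have hfib : (∑ a ∈ Finset.univ.filter
          (fun a : Fin k → G => (((i :: L).reverse).map a).prod = g),
          (((i :: L).reverse).map (fun j => F j (a j))).prod)
        = ∑ u : G, ∑ a ∈ Finset.univ.filter
            (fun a : Fin k → G => ((L.reverse.map a).prod = g * u⁻¹) ∧ a i = u),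
            ((L.reverse.map (fun j => F j (a j))).prod * F i u) := by
      rw [← Finset.sum_fiberwise (Finset.univ.filter
        (fun a : Fin k → G => (((i :: L).reverse).map a).prod = g)) (fun a => a i)
        (fun a => (((i :: L).reverse).map (fun j => F j (a j))).prod)]
      refine Finset.sum_congr rfl fun u _ => ?_
      rw [Finset.filter_filter, Finset.filter_congr fun a _ => hstep1 u a]
      refine Finset.sum_congr rfl fun a ha => ?_
      have hai : a i = u := (Finset.mem_filter.mp ha).2.2
      rw [hsplitP a, hai]
    have hupd : ∀ u : G, (Fintype.card G) • (∑ a ∈ Finset.univ.filter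
          (fun a : Fin k → G => ((L.reverse.map a).prod = g * u⁻¹) ∧ a i = u),
          (L.reverse.map (fun j => F j (a j))).prod)
        = ∑ a ∈ Finset.univ.filter
            (fun a : Fin k → G => (L.reverse.map a).prod = g * u⁻¹),
            (L.reverse.map (fun j => F j (a j))).prod := by
      intro u
      exact (sum_filter_update (fun a => (L.reverse.map a).prod = g * u⁻¹) _ i u
        (fun a v => hQ _ a v) hProd).symm
    apply nsmul_matrix_cancel (Fintype.card G) hn0
    calc (Fintype.card G) • ((Fintype.card G) ^ (k - (i :: L).length) • Wgen' F (i :: L) g)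
        = (Fintype.card G) ^ (k - L.length) • Wgen' F (i :: L) g := by
          rw [smul_smul]
          congr 1
          rw [← pow_succ']
          congr 1
          simp only [List.length_cons]
          omega
      _ = (Fintype.card G) ^ (k - L.length) • ∑ u : G, Wgen' F L (g * u⁻¹) * F i u := by
          rw [Wgen']
      _ = ∑ u : G, ((Fintype.card G) ^ (k - L.length) • Wgen' F L (g * u⁻¹)) * F i u := by
          rw [Finset.smul_sum]
          exact Finset.sum_congr rfl fun u _ => (smul_mul_assoc _ _ _).symm
      _ = ∑ u : G, (∑ a ∈ Finset.univ.filter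
            (fun a : Fin k → G => (L.reverse.map a).prod = g * u⁻¹),
            (L.reverse.map (fun j => F j (a j))).prod) * F i u := by
          exact Finset.sum_congr rfl fun u _ => by
            rw [Wgen'_closed F L hnd' (g * u⁻¹)]
      _ = ∑ u : G, (Fintype.card G) • ∑ a ∈ Finset.univ.filter
            (fun a : Fin k → G => ((L.reverse.map a).prod = g * u⁻¹) ∧ a i = u),
            ((L.reverse.map (fun j => F j (a j))).prod * F i u) := by
          refine Finset.sum_congr rfl fun u _ => ?_
          rw [← hupd u, smul_mul_assoc, Finset.sum_mul]
      _ = (Fintype.card G) • ∑ u : G, ∑ a ∈ Finset.univ.filter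
            (fun a : Fin k → G => ((L.reverse.map a).prod = g * u⁻¹) ∧ a i = u),
            ((L.reverse.map (fun j => F j (a j))).prod * F i u) := by
          rw [Finset.smul_sum]
      _ = (Fintype.card G) • ∑ a ∈ Finset.univ.filter
            (fun a : Fin k → G => (((i :: L).reverse).map a).prod = g),
            (((i :: L).reverse).map (fun j => F j (a j))).prod := by
          rw [hfib]

/-- With `Mᵢ = ∑_{(h,g)} Tᵢ^{g⁻¹} ⊗ D_{(h,g)}` and
`|Ψ⟩ = |G|^{-1/2} ∑_h |(h,1)⟩`, the partial matrix element of the ordered product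
`M₀ ⋯ M_{k-1}` (and of the reversed product of adjoints) equals
`∑_{a_{k-1}⋯a₁a₀=1} T₀^{a₀} ⋯ T_{k-1}^{a_{k-1}}`. -/
theorem statement11 (k : ℕ) (hk : 1 ≤ k) (t : Fin k → Bool)
    (M : Fin k → Matrix ((Fin k → G) × (G × G)) ((Fin k → G) × (G × G)) ℂ)
    (hM : ∀ i, M i = ∑ p : G × G, (factor i (Tsgn (t i) p.2⁻¹)) ⊗ₖ Dop p)
    (ψ : G × G → ℂ)
    (hψ : ∀ p, ψ p = if p.2 = 1 then (Real.sqrt (Fintype.card G) : ℂ)⁻¹ else 0)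
    (B : Matrix (Fin k → G) (Fin k → G) ℂ)
    (hB : B = ∑ a ∈ Finset.univ.filter
        (fun a : Fin k → G => (((List.finRange k).reverse).map a).prod = 1),
      ((List.finRange k).map (fun i => factor i (Tsgn (t i) (a i)))).prod) :
    pme ψ (((List.finRange k).map M).prod) = B ∧
    pme ψ ((((List.finRange k).reverse).map (fun i => (M i)ᴴ)).prod) = B := by
  set F : Fin k → G → Matrix (Fin k → G) (Fin k → G) ℂ :=
    fun i g => factor i (Tsgn (t i) g) with hF
  have hM' : ∀ i, M i = ∑ g : G, F i g ⊗ₖ Cop g⁻¹ := by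
    intro i
    rw [hM i, Fintype.sum_prod_type, Finset.sum_comm]
    refine (Fintype.sum_equiv (Equiv.inv G) _ _ fun g => ?_).symm
    simp only [Equiv.inv_apply, inv_inv]
    rw [← kron_sum_right, sum_Dop]
  have hMH : ∀ i, (M i)ᴴ = ∑ g : G, F i g ⊗ₖ Cop g := by
    intro i
    rw [hM' i, Matrix.conjTranspose_sum]
    refine Finset.sum_congr rfl fun g _ => ?_
    rw [kron_conjTranspose, factor_conjTranspose, Tsgn_conjTranspose, Cop_conjTranspose,
      inv_inv]
  have hpmeW : ∀ W : G → Matrix (Fin k → G) (Fin k → G) ℂ,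
      pme ψ (∑ g : G, W g ⊗ₖ Cop g⁻¹) = W 1 := by
    intro W
    rw [pme_sum]
    have h1 : ∀ g : G, pme ψ (W g ⊗ₖ Cop g⁻¹) = (if g = 1 then (1 : ℂ) else 0) • W g := by
      intro g
      rw [pme_kron, tau_Cop ψ hψ g⁻¹]
      congr 1
      simp [inv_eq_one]
    rw [Finset.sum_congr rfl fun g _ => h1 g, Finset.sum_eq_single (1 : G)]
    · rw [if_pos rfl, one_smul]
    · intro g _ hg
      rw [if_neg hg, zero_smul]
    · simp
  have hpmeW' : ∀ W : G → Matrix (Fin k → G) (Fin k → G) ℂ,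
      pme ψ (∑ g : G, W g ⊗ₖ Cop g) = W 1 := by
    intro W
    have := hpmeW (fun g => W g⁻¹)
    rw [show (∑ g : G, W g⁻¹ ⊗ₖ Cop g⁻¹) = ∑ g : G, W g ⊗ₖ Cop g from
      Fintype.sum_equiv (Equiv.inv G) _ _ fun g => by simp [Equiv.inv_apply]] at this
    simpa using this
  have hclosed : Wgen F (List.finRange k) 1 = B := by
    have h := Wgen_closed F (List.finRange k) (List.nodup_finRange k) 1
    rw [List.length_finRange, Nat.sub_self, pow_zero, one_smul] at h
    rw [h, hB]
  have hclosed' : Wgen' F (List.finRange k) 1 = B := by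
    have h := Wgen'_closed F (List.finRange k) (List.nodup_finRange k) 1
    rw [List.length_finRange, Nat.sub_self, pow_zero, one_smul] at h
    rw [h, hB]
    refine Finset.sum_congr rfl fun a _ => ?_
    apply List.Perm.prod_eq'
    · exact (List.reverse_perm _).map _
    · rw [List.pairwise_map]
      have hnd : ((List.finRange k).reverse).Nodup := List.nodup_reverse.mpr (List.nodup_finRange k)
      exact hnd.imp fun hij => factor_commute _ _ hij _ _
  constructor
  · rw [prod_eq F M hM' (List.finRange k), hpmeW, hclosed]
  · rw [prod_eq' F (fun i => (M i)ᴴ) hMH (List.finRange k), hpmeW', hclosed']
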